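/- With L, q, p, Π defined as closed-form functions of the tax rate τ by L = N[(1−τ)(mL_g+αF)+(mg+F)mN]/(α+(Nm−α)τ), q = (1−τ)(L+L_g−αg)/((Nm+α(1−τ))(L+L_g)), p = mw(L+L_g)/(L+L_g−α((L+L_g)q+g)), Π = ((L+L_g)q+g)(p−mw) − Fw, and assuming Nm > α, F > 0, w > 0, g ≥ 0, L_g ≥ 0, L+L_g−αg > 0, one has ∂Π/∂τ < 0 for τ ∈ (0,1): a tax increase lowers firm profit. -/

import Mathlib

/-- A tax increase lowers firm profit. -/
theorem stmt_17 (α N m F w g Lg : ℝ) (hα : 0 < α) (hN : 0 < N) (hm : 0 < m)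
    (hF : 0 < F) (hw : 0 < w) (hg : 0 ≤ g) (hLg : 0 ≤ Lg) (hNm : N * m > α)
    (τ : ℝ) (hτ0 : 0 < τ) (hτ1 : τ < 1)
    (hden : 0 < N * ((1 - τ) * (m * Lg + α * F) + (m * g + F) * m * N) / (α + (N * m - α) * τ)
      + Lg - α * g) :
    deriv (fun τ : ℝ =>
        let L := N * ((1 - τ) * (m * Lg + α * F) + (m * g + F) * m * N) / (α + (N * m - α) * τ)
        let q := (1 - τ) * (L + Lg - α * g) / ((N * m + α * (1 - τ)) * (L + Lg))
        let p := m * w * (L + Lg) / (L + Lg - α * ((L + Lg) * q + g))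
        ((L + Lg) * q + g) * (p - m * w) - F * w) τ < 0 := by
  clear hden
  set A : ℝ := Lg + N * F with hA
  set c : ℝ := N * m - α with hc
  have hA0 : 0 < A := by positivity
  have hc0 : 0 < c := by simp [hc]; linarith
  have hAgc : 0 < A + g * c := by positivity
  -- simplified function
  set P : ℝ → ℝ := fun t =>
    w * α * ((1 - t) * A + N * m * g) ^ 2 / (N * (A + g * c) * (α + c * t)) - F * w with hP
  have hmem : τ ∈ Set.Ioo (0:ℝ) 1 := ⟨hτ0, hτ1⟩
  have key : ∀ t ∈ Set.Ioo (0:ℝ) 1,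
      (fun τ : ℝ =>
        let L := N * ((1 - τ) * (m * Lg + α * F) + (m * g + F) * m * N) / (α + (N * m - α) * τ)
        let q := (1 - τ) * (L + Lg - α * g) / ((N * m + α * (1 - τ)) * (L + Lg))
        let p := m * w * (L + Lg) / (L + Lg - α * ((L + Lg) * q + g))
        ((L + Lg) * q + g) * (p - m * w) - F * w) t = P t := by
    intro t ht
    obtain ⟨ht0, ht1⟩ := ht
    simp only
    have hD : 0 < α + (N * m - α) * t := by nlinarith
    have hB : 0 < N * m + α * (1 - t) := by nlinarith
    set L : ℝ := N * ((1 - t) * (m * Lg + α * F) + (m * g + F) * m * N) / (α + (N * m - α) * t)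
      with hL
    have hS : L + Lg = (A * (N * m + α * (1 - t)) + m ^ 2 * N ^ 2 * g) / (α + (N * m - α) * t) := by
      rw [hL, hA, div_add' _ _ _ hD.ne']; congr 1; ring
    have hS0 : 0 < L + Lg := by
      rw [hS]; positivity
    have hSg : L + Lg - α * g = (N * m + α * (1 - t)) * (A + g * c) / (α + (N * m - α) * t) := by
      rw [hS, hc, hA, div_sub' hD.ne']; congr 1; ring
    have hSg0 : 0 < L + Lg - α * g := by rw [hSg]; positivity
    set q : ℝ := (1 - t) * (L + Lg - α * g) / ((N * m + α * (1 - t)) * (L + Lg)) with hq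
    have hQ : (L + Lg) * q + g = ((1 - t) * (L + Lg) + N * m * g) / (N * m + α * (1 - t)) := by
      rw [hq]; field_simp; ring
    have hSQ : L + Lg - α * ((L + Lg) * q + g)
        = N * m * (L + Lg - α * g) / (N * m + α * (1 - t)) := by
      rw [hQ]; field_simp; ring
    have hSQ0 : 0 < L + Lg - α * ((L + Lg) * q + g) := by rw [hSQ]; positivity
    set p : ℝ := m * w * (L + Lg) / (L + Lg - α * ((L + Lg) * q + g)) with hp
    have hpmw : p - m * w = w * α * ((1 - t) * (L + Lg) + N * m * g)
        / (N * (L + Lg - α * g)) := by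
      rw [hp, hSQ]
      field_simp
      ring
    simp only [hP]
    rw [hpmw, hQ, hSg, hS]
    have h1 : ((1:ℝ) - t) * ((A * (N * m + α * (1 - t)) + m ^ 2 * N ^ 2 * g) / (α + (N * m - α) * t)) + N * m * g
        = (N * m + α * (1 - t)) * ((1 - t) * A + N * m * g) / (α + (N * m - α) * t) := by
      rw [mul_div_assoc', div_add' _ _ _ hD.ne']; congr 1; ring
    rw [h1]
    rw [hc]
    field_simp
  have hEq : (fun τ : ℝ =>
        let L := N * ((1 - τ) * (m * Lg + α * F) + (m * g + F) * m * N) / (α + (N * m - α) * τ)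
        let q := (1 - τ) * (L + Lg - α * g) / ((N * m + α * (1 - τ)) * (L + Lg))
        let p := m * w * (L + Lg) / (L + Lg - α * ((L + Lg) * q + g))
        ((L + Lg) * q + g) * (p - m * w) - F * w) =ᶠ[nhds τ] P := by
    filter_upwards [isOpen_Ioo.mem_nhds hmem] with t ht using key t ht
  rw [hEq.deriv_eq]
  -- now compute deriv Π τ
  have hv0 : 0 < α + c * τ := by nlinarith
  have hAgc' : (0:ℝ) < A + g * c := hAgc
  have hK : (0:ℝ) < N * (A + g * c) := mul_pos hN hAgc
  have hu : HasDerivAt (fun t : ℝ => w * α * ((1 - t) * A + N * m * g) ^ 2)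
      (w * α * (2 * ((1 - τ) * A + N * m * g) * (-A))) τ := by
    have h1 : HasDerivAt (fun t : ℝ => (1 - t) * A + N * m * g) (-A) τ := by
      have := ((hasDerivAt_id τ).const_sub 1).mul_const A
      simpa using this.add_const (N * m * g)
    have h2 := (h1.pow 2)
    have h3 := h2.const_mul (w * α)
    refine h3.congr_deriv ?_
    norm_num
  have hv : HasDerivAt (fun t : ℝ => N * (A + g * c) * (α + c * t)) (N * (A + g * c) * c) τ := by
    have := ((hasDerivAt_id τ).const_mul c).const_add α
    have h2 := this.const_mul (N * (A + g * c))
    simpa [mul_comm, mul_assoc] using h2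
  have hvne : N * (A + g * c) * (α + c * τ) ≠ 0 := (mul_pos hK hv0).ne'
  have hdiv := (hu.div hv hvne).sub_const (F * w)
  have hdiv' : HasDerivAt (fun t => w * α * ((1 - t) * A + N * m * g) ^ 2 / (N * (A + g * c) * (α + c * t)) - F * w) _ τ := hdiv
  rw [hP, hdiv'.deriv]
  have hpos : 0 < (1 - τ) * A + N * m * g := by
    have : 0 < (1 - τ) * A := mul_pos (by linarith) hA0
    nlinarith [mul_nonneg (mul_nonneg hN.le hm.le) hg]
  apply div_neg_of_neg_of_pos
  · have h2 : 0 < 2 * A * (α + c * τ) + c * ((1 - τ) * A + N * m * g) := by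
      nlinarith [mul_pos hA0 hv0, mul_pos hc0 hpos]
    have h3 := mul_pos (mul_pos (mul_pos hw hα) hK) (mul_pos hpos h2)
    have h4 : w * α * (2 * ((1 - τ) * A + N * m * g) * -A) * (N * (A + g * c) * (α + c * τ)) -
        w * α * ((1 - τ) * A + N * m * g) ^ 2 * (N * (A + g * c) * c)
        = -(w * α * (N * (A + g * c)) * (((1 - τ) * A + N * m * g) *
            (2 * A * (α + c * τ) + c * ((1 - τ) * A + N * m * g)))) := by ring
    rw [h4]
    linarith
  · exact pow_pos (mul_pos hK hv0) 2
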